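/- There exists a central hyperplane arrangement 𝒜 in ℂ³ and a hyperplane H ∈ 𝒜 that is neither a loop nor a coloop, such that dim(C_{𝒜,k})₁ = 0 while dim(C_{𝒜/H,k})₁ = 1 for k = −2m ≤ −6; consequently no surjection of graded vector spaces C_{𝒜,k} → C_{𝒜/H,k} can exist, and the deletion–contraction sequence 0 → C_{𝒜∖H,k}(−1) → C_{𝒜,k} → C_{𝒜/H,k} → 0 is not exact. -/

import Mathlib

open MvPolynomial

/-- The directional derivative ∂_h on polynomials on ℂᵈ. -/
noncomputable def dirDeriv {d : ℕ} (h : Fin d → ℂ) :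
    Module.End ℂ (MvPolynomial (Fin d) ℂ) :=
  ∑ i, h i • (pderiv i).toLinearMap

open Classical in
/-- ρ_𝒜(h): the number of hyperplanes of the arrangement not containing `h`. -/
noncomputable def rhoA {d : ℕ} {ι : Type*} [Fintype ι]
    (L : ι → ((Fin d → ℂ) →ₗ[ℂ] ℂ)) (h : Fin d → ℂ) : ℕ :=
  (Finset.univ.filter fun i => L i h ≠ 0).card

/-- The degree-1 graded component of the inverse system C_{𝒜,k}. -/
noncomputable def Cdeg1 {d : ℕ} {ι : Type*} [Fintype ι]
    (L : ι → ((Fin d → ℂ) →ₗ[ℂ] ℂ)) (k : ℤ) :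
    Submodule ℂ (MvPolynomial (Fin d) ℂ) :=
  (homogeneousSubmodule (Fin d) ℂ 1) ⊓
    ⨅ (h : Fin d → ℂ) (_ : h ≠ 0),
      LinearMap.ker (dirDeriv h ^ (((rhoA L h : ℤ) + k + 1).toNat))

/-! ### Auxiliary material -/

section Aux

/-- A linear form on `ℂ³` with coefficient vector `c`. -/
noncomputable def lf (c : Fin 3 → ℂ) : (Fin 3 → ℂ) →ₗ[ℂ] ℂ := ∑ j, c j • LinearMap.proj j

lemma lf_apply (c h : Fin 3 → ℂ) : lf c h = c 0 * h 0 + c 1 * h 1 + c 2 * h 2 := by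
  simp [lf, Fin.sum_univ_three]

noncomputable def tv (i : Fin 15) : ℂ := ((i.1 % 5 : ℕ) : ℂ) + 1

lemma tv_ne_zero (i : Fin 15) : tv i ≠ 0 := by
  have : ((i.1 % 5 + 1 : ℕ) : ℂ) ≠ 0 := Nat.cast_ne_zero.2 (by omega)
  simpa [tv] using this

lemma tv_inj {i j : Fin 15} (h : tv i = tv j) : i.1 % 5 = j.1 % 5 := by
  have := add_right_cancel h
  exact_mod_cast this

/-- The arrangement: three pencils of five planes each, through the three coordinate axes. -/
noncomputable def Ff : Fin 15 → ((Fin 3 → ℂ) →ₗ[ℂ] ℂ) := fun i =>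
  if i.1 < 5 then lf ![0,1,tv i] else if i.1 < 10 then lf ![1,0,tv i] else lf ![1,tv i,0]

lemma Ff_apply1 (i : Fin 15) (hi : i.1 < 5) (h : Fin 3 → ℂ) :
    Ff i h = h 1 + tv i * h 2 := by
  simp [Ff, hi, lf_apply]

lemma Ff_apply2 (i : Fin 15) (hi : 5 ≤ i.1) (hi' : i.1 < 10) (h : Fin 3 → ℂ) :
    Ff i h = h 0 + tv i * h 2 := by
  simp [Ff, Nat.not_lt.2 hi, hi', lf_apply]

lemma Ff_apply3 (i : Fin 15) (hi : 10 ≤ i.1) (h : Fin 3 → ℂ) :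
    Ff i h = h 0 + tv i * h 1 := by
  have h5 : ¬ i.1 < 5 := by omega
  have h10 : ¬ i.1 < 10 := by omega
  simp [Ff, h5, h10, lf_apply]

open Classical in
/-- The set of indices whose form vanishes at `h`. -/
noncomputable def Z (h : Fin 3 → ℂ) : Finset (Fin 15) :=
  Finset.univ.filter (fun i => Ff i h = 0)

open Classical in
lemma rho_add_Z (h : Fin 3 → ℂ) : rhoA Ff h + (Z h).card = 15 := by
  unfold rhoA Z
  rw [add_comm]
  have := Finset.card_filter_add_card_filter_not
    (s := (Finset.univ : Finset (Fin 15))) (p := fun i => Ff i h = 0)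
  simpa using this

lemma Z1 {h : Fin 3 → ℂ} (h1 : h 1 = 0) (h2 : h 2 = 0) (h0 : h 0 ≠ 0) :
    Z h = Finset.univ.filter (fun i => i.1 < 5) := by
  classical
  ext i
  simp only [Z, Finset.mem_filter, Finset.mem_univ, true_and]
  rcases lt_or_ge i.1 5 with hi | hi
  · rw [Ff_apply1 i hi]
    simp [h1, h2, hi]
  · rcases lt_or_ge i.1 10 with hi' | hi'
    · rw [Ff_apply2 i hi hi']
      simp [h2, h0]
      omega
    · rw [Ff_apply3 i hi']
      simp [h1, h0]
      omega

lemma Z2 {h : Fin 3 → ℂ} (h0 : h 0 = 0) (h2 : h 2 = 0) (h1 : h 1 ≠ 0) :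
    Z h = Finset.univ.filter (fun i => 5 ≤ i.1 ∧ i.1 < 10) := by
  classical
  ext i
  simp only [Z, Finset.mem_filter, Finset.mem_univ, true_and]
  rcases lt_or_ge i.1 5 with hi | hi
  · rw [Ff_apply1 i hi]
    simp [h2, h1]
    omega
  · rcases lt_or_ge i.1 10 with hi' | hi'
    · rw [Ff_apply2 i hi hi']
      simp [h0, h2, hi, hi']
    · rw [Ff_apply3 i hi']
      simp [h0, h1, tv_ne_zero i]
      omega

lemma Z3 {h : Fin 3 → ℂ} (h0 : h 0 = 0) (h1 : h 1 = 0) (h2 : h 2 ≠ 0) :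
    Z h = Finset.univ.filter (fun i => 10 ≤ i.1) := by
  classical
  ext i
  simp only [Z, Finset.mem_filter, Finset.mem_univ, true_and]
  rcases lt_or_ge i.1 5 with hi | hi
  · rw [Ff_apply1 i hi]
    simp [h1, h2, tv_ne_zero i]
    omega
  · rcases lt_or_ge i.1 10 with hi' | hi'
    · rw [Ff_apply2 i hi hi']
      simp [h0, h2, tv_ne_zero i]
      omega
    · rw [Ff_apply3 i hi']
      simp [h0, h1, hi']

lemma Zcard_le_three {h : Fin 3 → ℂ} (c1 : ¬ (h 1 = 0 ∧ h 2 = 0))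
    (c2 : ¬ (h 0 = 0 ∧ h 2 = 0)) (c3 : ¬ (h 0 = 0 ∧ h 1 = 0)) :
    (Z h).card ≤ 3 := by
  classical
  have key : ∀ i ∈ Z h, ∀ j ∈ Z h, i.1 / 5 = j.1 / 5 → i = j := by
    intro i hi j hj hdiv
    simp only [Z, Finset.mem_filter, Finset.mem_univ, true_and] at hi hj
    have hmod : i.1 % 5 = j.1 % 5 := by
      rcases lt_or_ge i.1 5 with g1 | g1
      · have g1' : j.1 < 5 := by omega
        rw [Ff_apply1 i g1] at hi; rw [Ff_apply1 j g1'] at hj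
        have hsub : (tv i - tv j) * h 2 = 0 := by
          have hr : (tv i - tv j) * h 2 = (h 1 + tv i * h 2) - (h 1 + tv j * h 2) := by ring
          rw [hr, hi, hj, sub_zero]
        rcases mul_eq_zero.1 hsub with hs | hs
        · exact tv_inj (sub_eq_zero.1 hs)
        · exact absurd ⟨by simpa [hs] using hi, hs⟩ c1
      · rcases lt_or_ge i.1 10 with g2 | g2
        · have gj1 : 5 ≤ j.1 := by omega
          have gj2 : j.1 < 10 := by omega
          rw [Ff_apply2 i g1 g2] at hi; rw [Ff_apply2 j gj1 gj2] at hj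
          have hsub : (tv i - tv j) * h 2 = 0 := by
            have hr : (tv i - tv j) * h 2 = (h 0 + tv i * h 2) - (h 0 + tv j * h 2) := by ring
            rw [hr, hi, hj, sub_zero]
          rcases mul_eq_zero.1 hsub with hs | hs
          · exact tv_inj (sub_eq_zero.1 hs)
          · exact absurd ⟨by simpa [hs] using hi, hs⟩ c2
        · have gj : 10 ≤ j.1 := by omega
          rw [Ff_apply3 i g2] at hi; rw [Ff_apply3 j gj] at hj
          have hsub : (tv i - tv j) * h 1 = 0 := by
            have hr : (tv i - tv j) * h 1 = (h 0 + tv i * h 1) - (h 0 + tv j * h 1) := by ring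
            rw [hr, hi, hj, sub_zero]
          rcases mul_eq_zero.1 hsub with hs | hs
          · exact tv_inj (sub_eq_zero.1 hs)
          · exact absurd ⟨by simpa [hs] using hi, hs⟩ c3
    exact Fin.ext (by omega)
  have hinj : Set.InjOn (fun i : Fin 15 => (⟨i.1 / 5, by have := i.2; omega⟩ : Fin 3)) (Z h) := by
    intro i hi j hj hij
    exact key i hi j hj (by simpa using congrArg Fin.val hij)
  have hcard := Finset.card_le_card_of_injOn
    (fun i : Fin 15 => (⟨i.1 / 5, by have := i.2; omega⟩ : Fin 3))
    (fun a _ => Finset.mem_univ _) hinj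
  simpa using hcard

lemma three_ne {h : Fin 3 → ℂ} (hne : h ≠ 0) : ¬ (h 0 = 0 ∧ h 1 = 0 ∧ h 2 = 0) := by
  rintro ⟨a, b, c⟩
  exact hne (funext fun i => by fin_cases i <;> assumption)

lemma card_lt5 : (Finset.univ.filter (fun i : Fin 15 => i.1 < 5)).card = 5 := by decide

lemma card_mid5 : (Finset.univ.filter (fun i : Fin 15 => 5 ≤ i.1 ∧ i.1 < 10)).card = 5 := by decide

lemma card_ge10 : (Finset.univ.filter (fun i : Fin 15 => 10 ≤ i.1)).card = 5 := by decide

lemma Zcard_le_five {h : Fin 3 → ℂ} (hne : h ≠ 0) : (Z h).card ≤ 5 := by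
  by_cases c1 : h 1 = 0 ∧ h 2 = 0
  · have h0 : h 0 ≠ 0 := fun h0 => three_ne hne ⟨h0, c1.1, c1.2⟩
    rw [Z1 c1.1 c1.2 h0, card_lt5]
  · by_cases c2 : h 0 = 0 ∧ h 2 = 0
    · have h1 : h 1 ≠ 0 := fun h1 => three_ne hne ⟨c2.1, h1, c2.2⟩
      rw [Z2 c2.1 c2.2 h1, card_mid5]
    · by_cases c3 : h 0 = 0 ∧ h 1 = 0
      · have h2 : h 2 ≠ 0 := fun h2 => three_ne hne ⟨c3.1, c3.2, h2⟩
        rw [Z3 c3.1 c3.2 h2, card_ge10]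
      · exact le_trans (Zcard_le_three c1 c2 c3) (by norm_num)

lemma rho_ge {h : Fin 3 → ℂ} (hne : h ≠ 0) : 10 ≤ rhoA Ff h := by
  have h1 := rho_add_Z h
  have h2 := Zcard_le_five hne
  omega

lemma rho_of_Z5 {h : Fin 3 → ℂ} (hZ : (Z h).card = 5) : rhoA Ff h = 10 := by
  have := rho_add_Z h
  omega

lemma rho_E0 : rhoA Ff ![1,0,0] = 10 := by
  apply rho_of_Z5
  rw [Z1 (by simp) (by simp) (by simp), card_lt5]

lemma rho_E1 : rhoA Ff ![0,1,0] = 10 := by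
  apply rho_of_Z5
  rw [Z2 (by simp) (by simp) (by simp), card_mid5]

lemma rho_E2 : rhoA Ff ![0,0,1] = 10 := by
  apply rho_of_Z5
  rw [Z3 (by simp) (by simp) (by simp), card_ge10]

lemma Ff_ne_zero (i : Fin 15) : Ff i ≠ 0 := by
  intro hc
  have h1 : Ff i ![1,1,1] = 0 := by rw [hc]; rfl
  have h2 : Ff i ![1,1,1] = 1 + tv i := by
    rcases lt_or_ge i.1 5 with g | g
    · rw [Ff_apply1 i g]; simp
    · rcases lt_or_ge i.1 10 with g' | g'
      · rw [Ff_apply2 i g g']; simp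
      · rw [Ff_apply3 i g']; simp
  rw [h2] at h1
  have hne : ((i.1 % 5 + 2 : ℕ) : ℂ) ≠ 0 := Nat.cast_ne_zero.2 (by omega)
  apply hne
  push_cast
  rw [tv] at h1
  linear_combination h1

/-! ### The inclusion `ℂ² → ℂ³` parametrizing `H = ker (Ff 0)` -/

noncomputable def emap : (Fin 2 → ℂ) →ₗ[ℂ] (Fin 3 → ℂ) where
  toFun u := ![u 0, u 1, -(u 1)]
  map_add' u v := by
    funext i
    fin_cases i <;> simp <;> ring
  map_smul' c u := by
    funext i
    fin_cases i <;> simp <;> ring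

lemma emap_apply (u : Fin 2 → ℂ) : emap u = ![u 0, u 1, -(u 1)] := rfl

lemma emap_apply0 (u : Fin 2 → ℂ) : emap u 0 = u 0 := rfl
lemma emap_apply1 (u : Fin 2 → ℂ) : emap u 1 = u 1 := rfl
lemma emap_apply2 (u : Fin 2 → ℂ) : emap u 2 = -(u 1) := rfl

lemma emap_injective : Function.Injective emap := by
  intro u v huv
  funext i
  fin_cases i
  · have := congrFun huv 0
    simpa [emap_apply0] using this
  · have := congrFun huv 1
    simpa [emap_apply1] using this

lemma emap_ne_zero {u : Fin 2 → ℂ} (hu : u ≠ 0) : emap u ≠ 0 := by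
  intro hc
  apply hu
  funext i
  fin_cases i
  · have := congrFun hc 0
    simpa [emap_apply0] using this
  · have := congrFun hc 1
    simpa [emap_apply1] using this

lemma tv_zero : tv (0 : Fin 15) = 1 := by simp [tv]

lemma Ff_i0 (h : Fin 3 → ℂ) : Ff (0 : Fin 15) h = h 1 + h 2 := by
  rw [Ff_apply1 (0 : Fin 15) (by norm_num), tv_zero, one_mul]

lemma range_emap : LinearMap.range emap = LinearMap.ker (Ff (0 : Fin 15)) := by
  ext h
  simp only [LinearMap.mem_range, LinearMap.mem_ker, Ff_i0]
  constructor
  · rintro ⟨u, rfl⟩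
    rw [emap_apply1, emap_apply2]
    ring
  · intro hk
    refine ⟨![h 0, h 1], ?_⟩
    funext i
    fin_cases i
    · rfl
    · rfl
    · show -(![h 0, h 1] 1) = h 2
      simp only [Matrix.cons_val_one, Matrix.head_cons, Matrix.cons_val_zero]
      linear_combination -hk

lemma Ff0_emap (u : Fin 2 → ℂ) : Ff (0 : Fin 15) (emap u) = 0 := by
  rw [Ff_i0, emap_apply1, emap_apply2]
  ring

open Classical in
lemma rho_con (u : Fin 2 → ℂ) :
    rhoA (fun j : {j : Fin 15 // j ≠ 0} => (Ff j.1).comp emap) u = rhoA Ff (emap u) := by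
  unfold rhoA
  refine Finset.card_bij (fun j _ => j.1) ?_ ?_ ?_
  · intro a ha
    simp only [Finset.mem_filter, Finset.mem_univ, true_and, LinearMap.comp_apply] at ha ⊢
    exact ha
  · intro a _ b _ hab
    exact Subtype.ext hab
  · intro b hb
    simp only [Finset.mem_filter, Finset.mem_univ, true_and] at hb
    have hb0 : b ≠ 0 := by
      rintro rfl
      exact hb (Ff0_emap u)
    exact ⟨⟨b, hb0⟩, by simp only [Finset.mem_filter, Finset.mem_univ, true_and,
      LinearMap.comp_apply]; exact hb, rfl⟩

lemma rho_emap_10 {u : Fin 2 → ℂ} (hu1 : u 1 = 0) (hu0 : u 0 ≠ 0) :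
    rhoA Ff (emap u) = 10 := by
  apply rho_of_Z5
  rw [Z1 (by rw [emap_apply1]; exact hu1) (by rw [emap_apply2, hu1]; ring)
    (by rw [emap_apply0]; exact hu0), card_lt5]

lemma rho_emap_12 {u : Fin 2 → ℂ} (hu1 : u 1 ≠ 0) : 12 ≤ rhoA Ff (emap u) := by
  have hle : (Z (emap u)).card ≤ 3 := by
    apply Zcard_le_three
    · rw [emap_apply1]
      exact fun hc => hu1 hc.1
    · rw [emap_apply2]
      exact fun hc => hu1 (by simpa using hc.2)
    · rw [emap_apply1]
      exact fun hc => hu1 hc.2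
  have := rho_add_Z (emap u)
  omega

/-! ### Polynomial lemmas -/

lemma degree_single_one {d : ℕ} (j : Fin d) : Finsupp.degree (Finsupp.single j (1:ℕ)) = 1 := by
  exact Finsupp.degree_single j 1

lemma single_of_degree_one {d : ℕ} (m : Fin d →₀ ℕ) (hm : Finsupp.degree m = 1) :
    ∃ j, m = Finsupp.single j 1 := by
  have hne : m.support.Nonempty := by
    rcases Finset.eq_empty_or_nonempty m.support with h | h
    · exfalso
      have : m = 0 := by ext i; simpa using Finsupp.notMem_support_iff.1 (by simp [h])
      rw [this] at hm; simp [map_zero] at hm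
    · exact h
  obtain ⟨j, hj⟩ := hne
  have hj1 : m j = 1 := by
    have h1 : 1 ≤ m j := Nat.one_le_iff_ne_zero.2 (Finsupp.mem_support_iff.1 hj)
    have h2 : m j ≤ 1 := hm ▸ Finsupp.le_degree j m
    omega
  refine ⟨j, ?_⟩
  have hsum : m j + ∑ i ∈ m.support.erase j, m i = 1 := by
    rw [Finset.add_sum_erase _ _ hj]; exact hm
  have hz : ∀ i ∈ m.support.erase j, m i = 0 := by
    intro i hi
    have h3 := Finset.single_le_sum (f := (m : Fin d → ℕ)) (fun _ _ => Nat.zero_le _) hi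
    omega
  ext i
  rcases eq_or_ne i j with rfl | hij
  · simp [hj1]
  · rw [Finsupp.single_eq_of_ne' (Ne.symm hij)]
    by_cases hs : i ∈ m.support
    · exact hz i (Finset.mem_erase.2 ⟨hij, hs⟩)
    · exact Finsupp.notMem_support_iff.1 hs

lemma hom1_rep {d : ℕ} (f : MvPolynomial (Fin d) ℂ) (hf : f.IsHomogeneous 1) :
    f = ∑ j, C (coeff (Finsupp.single j 1) f) * X j := by
  classical
  ext m
  rw [coeff_sum]
  simp only [coeff_C_mul, coeff_X', mul_ite, mul_one, mul_zero]
  by_cases hd : Finsupp.degree m = 1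
  · obtain ⟨j0, rfl⟩ := single_of_degree_one m hd
    rw [Finset.sum_eq_single j0]
    · simp
    · intro i _ hij
      rw [if_neg (by simpa [Finsupp.single_left_inj (one_ne_zero)] using hij)]
    · simp
  · rw [hf.coeff_eq_zero hd]
    apply (Finset.sum_eq_zero ?_).symm
    intro i _
    rw [if_neg]
    intro hc
    exact hd (by rw [← hc, degree_single_one i])

lemma pderiv_hom1 {d : ℕ} (f : MvPolynomial (Fin d) ℂ) (j : Fin d)
    (hrep : f = ∑ j, C (coeff (Finsupp.single j 1) f) * X j) :
    pderiv j f = C (coeff (Finsupp.single j 1) f) := by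
  conv_lhs => rw [hrep]
  rw [map_sum, Finset.sum_eq_single j]
  · rw [pderiv_C_mul, pderiv_X_self, mul_one]
  · intro i _ hij
    rw [pderiv_C_mul, pderiv_X_of_ne hij, mul_zero]
  · simp

lemma dirDeriv_apply {d : ℕ} (h : Fin d → ℂ) (f : MvPolynomial (Fin d) ℂ) :
    dirDeriv h f = ∑ i, h i • pderiv i f := by
  simp [dirDeriv, LinearMap.sum_apply]

lemma dd_X {d : ℕ} (h : Fin d → ℂ) (j : Fin d) :
    dirDeriv h (X j : MvPolynomial (Fin d) ℂ) = C (h j) := by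
  rw [dirDeriv_apply, Finset.sum_eq_single j]
  · rw [pderiv_X_self, smul_eq_C_mul, mul_one]
  · intro i _ hij
    rw [pderiv_X_of_ne (Ne.symm hij), smul_zero]
  · simp

lemma dd_C {d : ℕ} (h : Fin d → ℂ) (r : ℂ) :
    dirDeriv h (C r : MvPolynomial (Fin d) ℂ) = 0 := by
  rw [dirDeriv_apply]
  simp [pderiv_C]

lemma dd_pow_X {d : ℕ} (h : Fin d → ℂ) (j : Fin d) {n : ℕ} (hn : 2 ≤ n) :
    (dirDeriv h ^ n) (X j : MvPolynomial (Fin d) ℂ) = 0 := by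
  obtain ⟨k, rfl⟩ : ∃ k, n = k + 2 := ⟨n - 2, by omega⟩
  rw [pow_add, Module.End.mul_apply]
  have h2 : (dirDeriv h ^ 2) (X j : MvPolynomial (Fin d) ℂ) = 0 := by
    rw [pow_two, Module.End.mul_apply, dd_X, dd_C]
  rw [h2, map_zero]

lemma mem_Cdeg1 {d : ℕ} {ι : Type*} [Fintype ι] (L : ι → ((Fin d → ℂ) →ₗ[ℂ] ℂ)) (k : ℤ)
    (f : MvPolynomial (Fin d) ℂ) :
    f ∈ Cdeg1 L k ↔ f ∈ homogeneousSubmodule (Fin d) ℂ 1 ∧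
      ∀ h : Fin d → ℂ, h ≠ 0 → (dirDeriv h ^ (((rhoA L h : ℤ) + k + 1).toNat)) f = 0 := by
  simp [Cdeg1, Submodule.mem_inf, Submodule.mem_iInf, LinearMap.mem_ker]

lemma dd_e0 (f : MvPolynomial (Fin 3) ℂ) : dirDeriv ![1,0,0] f = pderiv 0 f := by
  rw [dirDeriv_apply, Fin.sum_univ_three]; simp

lemma dd_e1 (f : MvPolynomial (Fin 3) ℂ) : dirDeriv ![0,1,0] f = pderiv 1 f := by
  rw [dirDeriv_apply, Fin.sum_univ_three]; simp

lemma dd_e2 (f : MvPolynomial (Fin 3) ℂ) : dirDeriv ![0,0,1] f = pderiv 2 f := by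
  rw [dirDeriv_apply, Fin.sum_univ_three]; simp

lemma dd_e0' (f : MvPolynomial (Fin 2) ℂ) : dirDeriv ![1,0] f = pderiv 0 f := by
  rw [dirDeriv_apply, Fin.sum_univ_two]; simp

lemma E0_ne : (![1,0,0] : Fin 3 → ℂ) ≠ 0 := by
  intro hc
  have := congrFun hc 0
  simp at this

lemma E1_ne : (![0,1,0] : Fin 3 → ℂ) ≠ 0 := by
  intro hc
  have := congrFun hc 1
  simp at this

lemma E2_ne : (![0,0,1] : Fin 3 → ℂ) ≠ 0 := by
  intro hc
  have := congrFun hc 2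
  simp at this

lemma e0'_ne : (![1,0] : Fin 2 → ℂ) ≠ 0 := by
  intro hc
  have := congrFun hc 0
  simp at this

/-! ### The two inverse systems in degree one -/

lemma CdegA_bot : Cdeg1 Ff (-10) = ⊥ := by
  rw [eq_bot_iff]
  intro f hf
  rw [mem_Cdeg1] at hf
  obtain ⟨hhom, hker⟩ := hf
  rw [mem_homogeneousSubmodule] at hhom
  have hrep := hom1_rep f hhom
  have hco : ∀ j : Fin 3, coeff (Finsupp.single j 1) f = 0 := by
    intro j
    fin_cases j
    · have hk := hker ![1,0,0] E0_ne
      have e1 : (((rhoA Ff ![1,0,0] : ℤ)) + -10 + 1).toNat = 1 := by rw [rho_E0]; omega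
      rw [e1, pow_one, dd_e0, pderiv_hom1 f 0 hrep] at hk
      exact C_eq_zero.1 hk
    · have hk := hker ![0,1,0] E1_ne
      have e1 : (((rhoA Ff ![0,1,0] : ℤ)) + -10 + 1).toNat = 1 := by rw [rho_E1]; omega
      rw [e1, pow_one, dd_e1, pderiv_hom1 f 1 hrep] at hk
      exact C_eq_zero.1 hk
    · have hk := hker ![0,0,1] E2_ne
      have e1 : (((rhoA Ff ![0,0,1] : ℤ)) + -10 + 1).toNat = 1 := by rw [rho_E2]; omega
      rw [e1, pow_one, dd_e2, pderiv_hom1 f 2 hrep] at hk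
      exact C_eq_zero.1 hk
  rw [Submodule.mem_bot, hrep]
  apply Finset.sum_eq_zero
  intro j _
  rw [hco j, map_zero, zero_mul]

lemma CdegB_span :
    Cdeg1 (fun j : {j : Fin 15 // j ≠ 0} => (Ff j.1).comp emap) (-10) =
      Submodule.span ℂ {(X 1 : MvPolynomial (Fin 2) ℂ)} := by
  apply le_antisymm
  · intro f hf
    rw [mem_Cdeg1] at hf
    obtain ⟨hhom, hker⟩ := hf
    rw [mem_homogeneousSubmodule] at hhom
    have hrep := hom1_rep f hhom
    have hk := hker ![1,0] e0'_ne
    have hrho : rhoA (fun j : {j : Fin 15 // j ≠ 0} => (Ff j.1).comp emap) ![1,0] = 10 := by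
      rw [rho_con]
      exact rho_emap_10 (by simp) (by simp)
    have e1 : (((rhoA (fun j : {j : Fin 15 // j ≠ 0} => (Ff j.1).comp emap) ![1,0] : ℤ))
        + -10 + 1).toNat = 1 := by rw [hrho]; omega
    rw [e1, pow_one, dd_e0', pderiv_hom1 f 0 hrep] at hk
    have hc0 : coeff (Finsupp.single (0 : Fin 2) 1) f = 0 := C_eq_zero.1 hk
    rw [Submodule.mem_span_singleton]
    refine ⟨coeff (Finsupp.single (1 : Fin 2) 1) f, ?_⟩
    rw [smul_eq_C_mul]
    conv_rhs => rw [hrep]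
    rw [Fin.sum_univ_two, hc0, map_zero, zero_mul, zero_add]
  · rw [Submodule.span_le, Set.singleton_subset_iff, SetLike.mem_coe, mem_Cdeg1]
    constructor
    · rw [mem_homogeneousSubmodule]
      exact isHomogeneous_X ℂ 1
    · intro h hne
      by_cases hh1 : h 1 = 0
      · have hh0 : h 0 ≠ 0 := by
          intro hc
          apply hne
          funext i
          fin_cases i <;> simpa
        have hrho : rhoA (fun j : {j : Fin 15 // j ≠ 0} => (Ff j.1).comp emap) h = 10 := by
          rw [rho_con]
          exact rho_emap_10 hh1 hh0
        have e1 : (((rhoA (fun j : {j : Fin 15 // j ≠ 0} => (Ff j.1).comp emap) h : ℤ))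
            + -10 + 1).toNat = 1 := by rw [hrho]; omega
        rw [e1, pow_one, dd_X, hh1, map_zero]
      · have hrho : 12 ≤ rhoA (fun j : {j : Fin 15 // j ≠ 0} => (Ff j.1).comp emap) h := by
          rw [rho_con]
          exact rho_emap_12 hh1
        apply dd_pow_X
        omega

/-! ### Non-coloop: the remaining forms span the dual space. -/

lemma proj_eq_lf (j : Fin 3) : (LinearMap.proj j : (Fin 3 → ℂ) →ₗ[ℂ] ℂ) =
    lf (fun i => if i = j then 1 else 0) := by
  apply LinearMap.ext
  intro h
  rw [lf_apply]
  fin_cases j <;> simp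

lemma span_top : Submodule.span ℂ (Ff '' {j | j ≠ (0 : Fin 15)}) = ⊤ := by
  have h5 : Ff ⟨5, by norm_num⟩ ∈ Ff '' {j | j ≠ (0 : Fin 15)} :=
    Set.mem_image_of_mem _ (by decide)
  have h6 : Ff ⟨6, by norm_num⟩ ∈ Ff '' {j | j ≠ (0 : Fin 15)} :=
    Set.mem_image_of_mem _ (by decide)
  have h10 : Ff ⟨10, by norm_num⟩ ∈ Ff '' {j | j ≠ (0 : Fin 15)} :=
    Set.mem_image_of_mem _ (by decide)
  have hF5 : Ff ⟨5, by norm_num⟩ = lf ![1,0,1] := by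
    unfold Ff
    norm_num
    congr 1
    funext i
    fin_cases i <;> simp [tv]
  have hF6 : Ff ⟨6, by norm_num⟩ = lf ![1,0,2] := by
    unfold Ff
    norm_num
    congr 1
    funext i
    fin_cases i <;> norm_num [tv]
  have hF10 : Ff ⟨10, by norm_num⟩ = lf ![1,1,0] := by
    unfold Ff
    norm_num
    congr 1
    funext i
    fin_cases i <;> norm_num [tv]
  set S := Submodule.span ℂ (Ff '' {j | j ≠ (0 : Fin 15)}) with hS
  have m5 : lf ![1,0,1] ∈ S := hF5 ▸ Submodule.subset_span h5
  have m6 : lf ![1,0,2] ∈ S := hF6 ▸ Submodule.subset_span h6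
  have m10 : lf ![1,1,0] ∈ S := hF10 ▸ Submodule.subset_span h10
  have mz : (LinearMap.proj 2 : (Fin 3 → ℂ) →ₗ[ℂ] ℂ) ∈ S := by
    have : (LinearMap.proj 2 : (Fin 3 → ℂ) →ₗ[ℂ] ℂ) = lf ![1,0,2] - lf ![1,0,1] := by
      apply LinearMap.ext
      intro h
      simp [lf_apply]
      ring
    rw [this]
    exact sub_mem m6 m5
  have mx : (LinearMap.proj 0 : (Fin 3 → ℂ) →ₗ[ℂ] ℂ) ∈ S := by
    have : (LinearMap.proj 0 : (Fin 3 → ℂ) →ₗ[ℂ] ℂ) =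
        lf ![1,0,1] - (LinearMap.proj 2 : (Fin 3 → ℂ) →ₗ[ℂ] ℂ) := by
      apply LinearMap.ext
      intro h
      simp [lf_apply]
    rw [this]
    exact sub_mem m5 mz
  have my : (LinearMap.proj 1 : (Fin 3 → ℂ) →ₗ[ℂ] ℂ) ∈ S := by
    have : (LinearMap.proj 1 : (Fin 3 → ℂ) →ₗ[ℂ] ℂ) =
        lf ![1,1,0] - (LinearMap.proj 0 : (Fin 3 → ℂ) →ₗ[ℂ] ℂ) := by
      apply LinearMap.ext
      intro h
      simp [lf_apply]
    rw [this]
    exact sub_mem m10 mx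
  rw [eq_top_iff]
  intro g _
  have hgrep : g = g (fun j => if (0:Fin 3) = j then 1 else 0) • (LinearMap.proj 0)
      + g (fun j => if (1:Fin 3) = j then 1 else 0) • (LinearMap.proj 1)
      + g (fun j => if (2:Fin 3) = j then 1 else 0) • (LinearMap.proj 2) := by
    apply LinearMap.ext
    intro x
    rw [LinearMap.pi_apply_eq_sum_univ g x, Fin.sum_univ_three]
    simp [mul_comm]
  rw [hgrep]
  exact add_mem (add_mem (Submodule.smul_mem _ _ mx) (Submodule.smul_mem _ _ my))
    (Submodule.smul_mem _ _ mz)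

end Aux

/-- there is a central arrangement 𝒜 in ℂ³ and a hyperplane H ∈ 𝒜, neither
a loop nor a coloop, such that for k = −2m ≤ −6 both 𝒜 and the contraction 𝒜/H (an
arrangement in H ≅ ℂ², obtained by restricting the other forms along a parametrization
of H) have ρ = 2m, yet dim (C_{𝒜,k})₁ = 0 while dim (C_{𝒜/H,k})₁ = 1; consequently
there is no surjection (C_{𝒜,k})₁ → (C_{𝒜/H,k})₁, so no degree-preserving surjection
C_{𝒜,k} → C_{𝒜/H,k} exists and the deletion–contraction sequence is not exact. -/
theorem stmt_12 :
    ∃ (m : ℕ), 3 ≤ m ∧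
    ∃ (F : Fin (3 * m) → ((Fin 3 → ℂ) →ₗ[ℂ] ℂ)) (i₀ : Fin (3 * m)),
      (∀ i, F i ≠ 0) ∧
      -- H = ker (F i₀) is not a coloop: the remaining forms still have full rank
      Submodule.span ℂ (F '' {j | j ≠ i₀}) = ⊤ ∧
      ∃ e : (Fin 2 → ℂ) →ₗ[ℂ] (Fin 3 → ℂ), Function.Injective e ∧
        LinearMap.range e = LinearMap.ker (F i₀) ∧
        -- contraction 𝒜/H: the forms F j (j ≠ i₀) restricted to H
        ((∀ h : Fin 3 → ℂ, h ≠ 0 → 2 * m ≤ rhoA F h) ∧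
         (∃ h : Fin 3 → ℂ, h ≠ 0 ∧ rhoA F h = 2 * m) ∧
         (∀ h : Fin 2 → ℂ, h ≠ 0 →
            2 * m ≤ rhoA (fun j : {j // j ≠ i₀} => (F j.1).comp e) h) ∧
         (∃ h : Fin 2 → ℂ, h ≠ 0 ∧
            rhoA (fun j : {j // j ≠ i₀} => (F j.1).comp e) h = 2 * m) ∧
         Module.finrank ℂ (Cdeg1 F (-(2 * m : ℤ))) = 0 ∧
         Module.finrank ℂ
            (Cdeg1 (fun j : {j // j ≠ i₀} => (F j.1).comp e) (-(2 * m : ℤ))) = 1 ∧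
         ¬∃ T : Cdeg1 F (-(2 * m : ℤ)) →ₗ[ℂ]
              Cdeg1 (fun j : {j // j ≠ i₀} => (F j.1).comp e) (-(2 * m : ℤ)),
            Function.Surjective T) := by
  refine ⟨5, by norm_num, Ff, (0 : Fin 15), Ff_ne_zero, span_top, emap, emap_injective,
    range_emap, ?_, ?_, ?_, ?_, ?_, ?_, ?_⟩
  · intro h hne
    exact le_trans (by norm_num) (rho_ge hne)
  · exact ⟨![1,0,0], E0_ne, by rw [rho_E0]⟩
  · intro h hne
    have h1 := rho_con h
    rw [h1]
    exact le_trans (by norm_num) (rho_ge (emap_ne_zero hne))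
  · refine ⟨![1,0], e0'_ne, ?_⟩
    rw [rho_con]
    rw [rho_emap_10 (by simp) (by simp)]
  · have hk : (-(2 * ((5:ℕ) : ℤ))) = (-10 : ℤ) := by norm_num
    rw [hk, CdegA_bot]
    exact finrank_bot ℂ _
  · have hk : (-(2 * ((5:ℕ) : ℤ))) = (-10 : ℤ) := by norm_num
    rw [hk, CdegB_span]
    exact finrank_span_singleton (X_ne_zero 1)
  · have hk : (-(2 * ((5:ℕ) : ℤ))) = (-10 : ℤ) := by norm_num
    rw [hk]
    rintro ⟨T, hT⟩
    obtain ⟨x, hx⟩ := hT ⟨X 1, by rw [CdegB_span]; exact Submodule.mem_span_singleton_self _⟩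
    have hx0 : x = 0 := by
      apply Subtype.ext
      have hx2 : (x : MvPolynomial (Fin 3) ℂ) = 0 :=
        (Submodule.eq_bot_iff _).1 CdegA_bot x.1 x.2
      simpa using hx2
    rw [hx0, map_zero] at hx
    have hX : (X 1 : MvPolynomial (Fin 2) ℂ) = 0 := by
      have := congrArg Subtype.val hx
      simpa using this.symm
    exact X_ne_zero 1 hX
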